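/- The generating function for stacks satisfies 1 + ∑_{m ≥ 1} q^m/((q;q)_{m-1}² (1-q^m)) = ((q;q)_∞)^{-2} · L(q) + 1, i.e., ∑_{m ≥ 1} q^m/((q;q)_{m-1}²(1-q^m)) = ((q;q)_∞)^{-2} ∑_{n ≥ 1} (-1)^{n-1} q^{n(n+1)/2}, as formal power series. -/

import Mathlib

open PowerSeries

/-- The q-Pochhammer symbol `(q;q)_m = ∏_{j=1}^m (1 - q^j)`. -/
noncomputable def qPoch (m : ℕ) : PowerSeries ℚ :=
  ∏ j ∈ Finset.range m, (1 - PowerSeries.X ^ (j + 1))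

/-- The infinite product `(q;q)_∞`, defined coefficientwise. -/
noncomputable def qPochInf : PowerSeries ℚ :=
  PowerSeries.mk fun n => PowerSeries.coeff n (qPoch (n + 1))

/-- The formal sum `∑_{m ≥ 0} F m` of a family of power series in which the `m`-th
term has order at least `m`, defined coefficientwise. -/
noncomputable def formalSum (F : ℕ → PowerSeries ℚ) : PowerSeries ℚ :=
  PowerSeries.mk fun n => ∑ m ∈ Finset.range (n + 1), PowerSeries.coeff n (F m)

open Finset

noncomputable def pr (a b : ℕ) : PowerSeries ℚ := ∏ j ∈ Finset.Ico a b, (1 - X ^ j)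

lemma pr_empty {a b : ℕ} (h : b ≤ a) : pr a b = 1 := by
  rw [pr, Finset.Ico_eq_empty (by omega), Finset.prod_empty]

lemma pr_mul {a b c : ℕ} (hab : a ≤ b) (hbc : b ≤ c) : pr a b * pr b c = pr a c :=
  Finset.prod_Ico_consecutive _ hab hbc

lemma pr_bot {a b : ℕ} (h : a < b) : pr a b = (1 - X ^ a) * pr (a + 1) b :=
  Finset.prod_eq_prod_Ico_succ_bot h _

lemma constCoeff_pr {a b : ℕ} (h : 1 ≤ a) : constantCoeff (pr a b) = 1 := by
  rw [pr, map_prod]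
  apply Finset.prod_eq_one
  intro j hj
  have hj1 : 1 ≤ j := le_trans h (Finset.mem_Ico.mp hj).1
  rw [map_sub, map_one, map_pow, constantCoeff_X, zero_pow (by omega), sub_zero]

lemma pr_sub_one_dvd (a b : ℕ) : (X : PowerSeries ℚ) ^ a ∣ pr a b - 1 := by
  induction b with
  | zero => rw [pr_empty (Nat.zero_le a), sub_self]; exact dvd_zero _
  | succ b ih =>
    rcases le_or_gt a b with hab | hab
    · rw [pr, Finset.prod_Ico_succ_top hab, ← pr]
      have : pr a b * (1 - X ^ b) - 1 = (pr a b - 1) - pr a b * X ^ b := by ring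
      rw [this]
      exact dvd_sub ih (Dvd.dvd.mul_left (pow_dvd_pow X hab) _)
    · rw [pr_empty hab, sub_self]; exact dvd_zero _

lemma coeff_eq_of_dvd {D : ℕ} {f g : PowerSeries ℚ} (h : (X : PowerSeries ℚ) ^ D ∣ f - g)
    {j : ℕ} (hj : j < D) : coeff j f = coeff j g := by
  have := (PowerSeries.X_pow_dvd_iff.mp h) j hj
  rw [map_sub, sub_eq_zero] at this
  exact this

lemma dvd_of_coeff_eq {D : ℕ} {f g : PowerSeries ℚ}
    (h : ∀ j < D, coeff j f = coeff j g) : (X : PowerSeries ℚ) ^ D ∣ f - g := by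
  rw [PowerSeries.X_pow_dvd_iff]
  intro m hm
  rw [map_sub, sub_eq_zero]
  exact h m hm

lemma inv_congr {D : ℕ} {f g : PowerSeries ℚ} (hf : constantCoeff f ≠ 0)
    (hg : constantCoeff g ≠ 0) (h : (X : PowerSeries ℚ) ^ D ∣ f - g) :
    (X : PowerSeries ℚ) ^ D ∣ f⁻¹ - g⁻¹ := by
  have key : f⁻¹ - g⁻¹ = f⁻¹ * (g - f) * g⁻¹ := by
    have h1 : f⁻¹ * f = 1 := PowerSeries.inv_mul_cancel f hf
    have h2 : g * g⁻¹ = 1 := PowerSeries.mul_inv_cancel g hg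
    calc f⁻¹ - g⁻¹ = f⁻¹ * (g * g⁻¹) - (f⁻¹ * f) * g⁻¹ := by rw [h1, h2]; ring
    _ = f⁻¹ * (g - f) * g⁻¹ := by ring
  rw [key]
  have : (X : PowerSeries ℚ) ^ D ∣ g - f := by
    have := h.neg_right; simpa using this
  exact (this.mul_left _).mul_right _

lemma qPoch_eq_pr (m : ℕ) : qPoch m = pr 1 (m + 1) := by
  rw [qPoch, pr, Finset.prod_Ico_eq_prod_range]
  simp [add_comm]

lemma constCoeff_qPoch (m : ℕ) : constantCoeff (qPoch m) = 1 := by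
  rw [qPoch_eq_pr]; exact constCoeff_pr (le_refl 1)

lemma constCoeff_one_sub_X_pow (j : ℕ) (hj : 1 ≤ j) :
    constantCoeff (1 - X ^ j : PowerSeries ℚ) = 1 := by
  rw [map_sub, map_one, map_pow, constantCoeff_X, zero_pow (by omega), sub_zero]

-- (1 - X^(k+1)) * (qPoch (k+1))⁻¹ = (qPoch k)⁻¹

lemma pr_zero_eq (n : ℕ) : pr 0 (n + 1) = 0 := by
  rw [pr_bot (Nat.succ_pos n)]
  simp

-- base telescoping: ∑_{m=0}^{t} X^m R_m = R_t

lemma J_base (n : ℕ) : ∀ t ≤ n,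
    ∑ m ∈ range (t + 1), (X : PowerSeries ℚ) ^ m * pr (m + 1) (n + 1) = pr (t + 1) (n + 1) := by
  intro t ht
  induction t with
  | zero => simp
  | succ t ih =>
    rw [Finset.sum_range_succ, ih (by omega)]
    have h1 : pr (t + 1) (n + 1) = (1 - X ^ (t + 1)) * pr (t + 2) (n + 1) := pr_bot (by omega)
    rw [h1]; ring

noncomputable def Jp (n k : ℕ) : PowerSeries ℚ :=
  ∑ m ∈ range (n + 1), (X : PowerSeries ℚ) ^ (m * (k + 1)) * pr (m + 1) (n + 1)

lemma J_rec (n k : ℕ) :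
    Jp n (k + 1) = Jp n k - X ^ (k + 1) * Jp n k + X ^ ((n + 1) * (k + 1)) := by
  have key : Jp n k - Jp n (k + 1)
      = ∑ m ∈ range (n + 1), (X : PowerSeries ℚ) ^ (m * (k + 1)) * pr m (n + 1) := by
    rw [Jp, Jp, ← Finset.sum_sub_distrib]
    apply Finset.sum_congr rfl
    intro m hm
    have hm' : m ≤ n := by simpa using Nat.lt_succ_iff.mp (Finset.mem_range.mp hm)
    have hpr : pr m (n + 1) = (1 - X ^ m) * pr (m + 1) (n + 1) := pr_bot (by omega)
    have hexp : m * (k + 2) = m * (k + 1) + m := by ring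
    rw [hpr, hexp, pow_add]; ring
  have key2 : ∑ m ∈ range (n + 1), (X : PowerSeries ℚ) ^ (m * (k + 1)) * pr m (n + 1)
      = X ^ (k + 1) * (Jp n k - X ^ (n * (k + 1))) := by
    rw [Finset.sum_range_succ']
    have h0 : (X : PowerSeries ℚ) ^ (0 * (k + 1)) * pr 0 (n + 1) = 0 := by
      rw [pr_zero_eq]; ring
    rw [h0, add_zero]
    have : ∀ m, (X : PowerSeries ℚ) ^ ((m + 1) * (k + 1)) * pr (m + 1) (n + 1)
        = X ^ (k + 1) * (X ^ (m * (k + 1)) * pr (m + 1) (n + 1)) := by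
      intro m
      have : (m + 1) * (k + 1) = (k + 1) + m * (k + 1) := by ring
      rw [this, pow_add]; ring
    rw [Finset.sum_congr rfl (fun m _ => this m), ← Finset.mul_sum]
    congr 1
    have : Jp n k = (∑ m ∈ range n, (X:PowerSeries ℚ) ^ (m * (k+1)) * pr (m+1) (n+1))
        + X ^ (n * (k + 1)) * pr (n + 1) (n + 1) := Finset.sum_range_succ _ _
    rw [this, pr_empty (le_refl _)]
    ring
  have : Jp n (k + 1) = Jp n k - (Jp n k - Jp n (k + 1)) := by ring
  rw [this, key, key2]
  have : (n + 1) * (k + 1) = (k + 1) + n * (k + 1) := by ring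
  rw [this, pow_add]
  ring

lemma J_cong (n : ℕ) : ∀ k, (X : PowerSeries ℚ) ^ (n + 1) ∣ Jp n k - qPoch k := by
  intro k
  induction k with
  | zero =>
    have : Jp n 0 = pr (n + 1) (n + 1) := by
      rw [Jp, ← J_base n n (le_refl n)]
      apply Finset.sum_congr rfl
      intro m _; norm_num
    rw [this, pr_empty (le_refl _), qPoch, Finset.range_zero, Finset.prod_empty, sub_self]
    exact dvd_zero _
  | succ k ih =>
    rw [J_rec]
    have hq : qPoch (k + 1) = qPoch k * (1 - X ^ (k + 1)) := Finset.prod_range_succ _ _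
    have expand : Jp n k - X ^ (k + 1) * Jp n k + X ^ ((n + 1) * (k + 1)) - qPoch (k + 1)
        = (1 - X ^ (k + 1)) * (Jp n k - qPoch k) + X ^ ((n + 1) * (k + 1)) := by
      rw [hq]; ring
    rw [expand]
    apply dvd_add (ih.mul_left _)
    exact pow_dvd_pow X (by nlinarith)

lemma qPoch_inv_succ (k : ℕ) :
    (1 - X ^ (k + 1)) * (qPoch (k + 1))⁻¹ = (qPoch k)⁻¹ := by
  have hq : qPoch (k + 1) = qPoch k * (1 - X ^ (k + 1)) := Finset.prod_range_succ _ _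
  rw [hq, PowerSeries.mul_inv_rev]
  have h1 : (1 - (X:PowerSeries ℚ) ^ (k + 1)) * (1 - X ^ (k + 1))⁻¹ = 1 :=
    PowerSeries.mul_inv_cancel _ (by rw [constCoeff_one_sub_X_pow (k+1) (by omega)]; norm_num)
  calc (1 - X ^ (k + 1)) * ((1 - X ^ (k + 1))⁻¹ * (qPoch k)⁻¹)
      = ((1 - X ^ (k + 1)) * (1 - X ^ (k + 1))⁻¹) * (qPoch k)⁻¹ := by ring
    _ = (qPoch k)⁻¹ := by rw [h1, one_mul]

def T (k : ℕ) : ℕ := k * (k + 1) / 2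

lemma T_succ (k : ℕ) : T (k + 1) = T k + (k + 1) := by
  have h : (k + 1) * (k + 2) = k * (k + 1) + (k + 1) * 2 := by ring
  rw [T, T, h, Nat.add_mul_div_right _ _ (by norm_num)]

lemma T_ge (k : ℕ) : k ≤ T k := by
  rw [T]
  calc k = 2 * k / 2 := by omega
  _ ≤ k * (k + 1) / 2 := Nat.div_le_div_right (by nlinarith [sq_nonneg k, Nat.zero_le (k*k)])

noncomputable def Em (n m : ℕ) : PowerSeries ℚ :=
  ∑ k ∈ range (n + 1), (-1 : PowerSeries ℚ) ^ k * X ^ (T k + m * k) * (qPoch k)⁻¹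

lemma Em_rec (n m : ℕ) :
    Em n m = Em n (m + 1) - X ^ (m + 1) * Em n (m + 1)
      + (-1 : PowerSeries ℚ) ^ n * X ^ ((m + 1) + (T n + (m + 1) * n)) * (qPoch n)⁻¹ := by
  have key : Em n m - Em n (m + 1)
      = ∑ k ∈ range (n + 1),
          (-1 : PowerSeries ℚ) ^ k * (X ^ (T k + m * k) * (1 - X ^ k)) * (qPoch k)⁻¹ := by
    rw [Em, Em, ← Finset.sum_sub_distrib]
    apply Finset.sum_congr rfl
    intro k _
    have hexp : T k + (m + 1) * k = (T k + m * k) + k := by ring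
    rw [hexp, pow_add]; ring
  have step : ∀ k, (-1 : PowerSeries ℚ) ^ (k+1) * (X ^ (T (k+1) + m * (k+1)) * (1 - X ^ (k+1))) * (qPoch (k+1))⁻¹
      = -(X ^ (m+1) * ((-1 : PowerSeries ℚ) ^ k * X ^ (T k + (m+1) * k) * (qPoch k)⁻¹)) := by
    intro k
    have h1 : (1 - (X:PowerSeries ℚ) ^ (k+1)) * (qPoch (k+1))⁻¹ = (qPoch k)⁻¹ := qPoch_inv_succ k
    have hexp : T (k+1) + m * (k+1) = (m + 1) + (T k + (m+1) * k) := by rw [T_succ]; ring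
    calc (-1 : PowerSeries ℚ) ^ (k+1) * (X ^ (T (k+1) + m * (k+1)) * (1 - X ^ (k+1))) * (qPoch (k+1))⁻¹
        = (-1 : PowerSeries ℚ) ^ (k+1) * X ^ (T (k+1) + m * (k+1)) * ((1 - X ^ (k+1)) * (qPoch (k+1))⁻¹) := by ring
      _ = (-1 : PowerSeries ℚ) ^ (k+1) * X ^ ((m + 1) + (T k + (m+1) * k)) * (qPoch k)⁻¹ := by rw [h1, hexp]
      _ = -(X ^ (m+1) * ((-1 : PowerSeries ℚ) ^ k * X ^ (T k + (m+1) * k) * (qPoch k)⁻¹)) := by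
          rw [pow_succ, pow_add]; ring
  have key2 : Em n m - Em n (m + 1)
      = -(X ^ (m+1) * (Em n (m+1)
          - (-1 : PowerSeries ℚ) ^ n * X ^ (T n + (m+1) * n) * (qPoch n)⁻¹)) := by
    rw [key, Finset.sum_range_succ']
    have h0 : (-1 : PowerSeries ℚ) ^ 0 * (X ^ (T 0 + m * 0) * (1 - X ^ 0)) * (qPoch 0)⁻¹ = 0 := by
      norm_num
    rw [h0, add_zero, Finset.sum_congr rfl (fun k _ => step k), Finset.sum_neg_distrib,
      ← Finset.mul_sum]
    have hEm : Em n (m+1) = (∑ k ∈ range n, (-1 : PowerSeries ℚ) ^ k * X ^ (T k + (m+1) * k) * (qPoch k)⁻¹)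
        + (-1 : PowerSeries ℚ) ^ n * X ^ (T n + (m+1) * n) * (qPoch n)⁻¹ := Finset.sum_range_succ _ _
    rw [hEm]; ring
  have : Em n m = Em n (m+1) + (Em n m - Em n (m+1)) := by ring
  rw [this, key2, pow_add]
  ring

lemma Em_cong (n : ℕ) : ∀ j m, n + 1 ≤ m + j →
    (X : PowerSeries ℚ) ^ (n + 1) ∣ Em n m - pr (m + 1) (n + 1) := by
  intro j
  induction j with
  | zero =>
    intro m hm
    rw [pr_empty (by omega)]
    have h0 : Em n m - 1
        = ∑ k ∈ range n, (-1 : PowerSeries ℚ) ^ (k+1) * X ^ (T (k+1) + m * (k+1)) * (qPoch (k+1))⁻¹ := by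
      rw [Em, Finset.sum_range_succ']
      have : (-1 : PowerSeries ℚ) ^ 0 * X ^ (T 0 + m * 0) * (qPoch 0)⁻¹ = 1 := by
        simp [T, qPoch]
      rw [this]; ring
    rw [h0]
    apply Finset.dvd_sum
    intro k _
    have hexp : n + 1 ≤ T (k+1) + m * (k+1) := by
      have := T_ge (k+1)
      have : 1 ≤ k + 1 := by omega
      nlinarith [T_ge (k+1)]
    exact ((pow_dvd_pow X hexp).mul_left _).mul_right _
  | succ j ih =>
    intro m hm
    have hnext := ih (m + 1) (by omega)
    rw [Em_rec]
    have expand : Em n (m + 1) - X ^ (m + 1) * Em n (m + 1)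
          + (-1 : PowerSeries ℚ) ^ n * X ^ ((m + 1) + (T n + (m + 1) * n)) * (qPoch n)⁻¹
          - pr (m + 1) (n + 1)
        = (1 - X ^ (m + 1)) * (Em n (m + 1) - pr (m + 2) (n + 1))
          + ((1 - X ^ (m + 1)) * pr (m + 2) (n + 1) - pr (m + 1) (n + 1))
          + (-1 : PowerSeries ℚ) ^ n * X ^ ((m + 1) + (T n + (m + 1) * n)) * (qPoch n)⁻¹ := by
      ring
    rw [expand]
    apply dvd_add
    apply dvd_add (hnext.mul_left _)
    · rcases le_or_gt (m + 2) (n + 1) with hc | hc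
      · rw [← pr_bot (by omega : m + 1 < n + 1), sub_self]
        exact dvd_zero _
      · rw [pr_empty (by omega), pr_empty (by omega), mul_one]
        have : (1 : PowerSeries ℚ) - X ^ (m+1) - 1 = -(X ^ (m+1)) := by ring
        rw [this]
        exact (pow_dvd_pow X (by omega)).neg_right
    · exact ((pow_dvd_pow X (by have := T_ge n; omega : n + 1 ≤ (m+1) + (T n + (m+1)*n))).mul_left _).mul_right _

noncomputable def Uu (n : ℕ) : PowerSeries ℚ :=
  ∑ m ∈ range (n + 1), (X : PowerSeries ℚ) ^ m * (pr (m + 1) (n + 1)) ^ 2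

noncomputable def Th (n : ℕ) : PowerSeries ℚ :=
  ∑ k ∈ range (n + 1), (-1 : PowerSeries ℚ) ^ k * X ^ (T k)

lemma qPoch_inv_mul (k : ℕ) : (qPoch k)⁻¹ * qPoch k = 1 :=
  PowerSeries.inv_mul_cancel _ (by rw [constCoeff_qPoch]; norm_num)

lemma U_cong (n : ℕ) : (X : PowerSeries ℚ) ^ (n + 1) ∣ Uu n - Th n := by
  set V : PowerSeries ℚ :=
    ∑ m ∈ range (n + 1), (X : PowerSeries ℚ) ^ m * pr (m + 1) (n + 1) * Em n m with hV
  have ha : (X : PowerSeries ℚ) ^ (n + 1) ∣ Uu n - V := by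
    rw [Uu, hV, ← Finset.sum_sub_distrib]
    apply Finset.dvd_sum
    intro m _
    have : (X : PowerSeries ℚ) ^ m * (pr (m + 1) (n + 1)) ^ 2
        - X ^ m * pr (m + 1) (n + 1) * Em n m
        = -(X ^ m * pr (m + 1) (n + 1) * (Em n m - pr (m + 1) (n + 1))) := by ring
    rw [this]
    exact ((Em_cong n (n + 1) m (by omega)).mul_left _).neg_right
  have hb : V = ∑ k ∈ range (n + 1),
      (-1 : PowerSeries ℚ) ^ k * X ^ (T k) * (qPoch k)⁻¹ * Jp n k := by
    rw [hV]
    have perm : ∀ m ∈ range (n+1), (X : PowerSeries ℚ) ^ m * pr (m + 1) (n + 1) * Em n m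
        = ∑ k ∈ range (n+1), (-1 : PowerSeries ℚ) ^ k * X ^ (T k) * (qPoch k)⁻¹
            * (X ^ (m * (k + 1)) * pr (m + 1) (n + 1)) := by
      intro m _
      rw [Em, Finset.mul_sum]
      apply Finset.sum_congr rfl
      intro k _
      have hexp : T k + m * k = T k + m * k := rfl
      have he2 : m * (k + 1) = m + m * k := by ring
      rw [he2, pow_add, pow_add]
      ring
    rw [Finset.sum_congr rfl perm, Finset.sum_comm]
    apply Finset.sum_congr rfl
    intro k _
    rw [Jp, Finset.mul_sum]
  have hc : (X : PowerSeries ℚ) ^ (n + 1) ∣ V - Th n := by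
    rw [hb, Th, ← Finset.sum_sub_distrib]
    apply Finset.dvd_sum
    intro k _
    have : (-1 : PowerSeries ℚ) ^ k * X ^ (T k) * (qPoch k)⁻¹ * Jp n k
        - (-1 : PowerSeries ℚ) ^ k * X ^ (T k)
        = (-1 : PowerSeries ℚ) ^ k * X ^ (T k) * (qPoch k)⁻¹ * (Jp n k - qPoch k) := by
      have h1 := qPoch_inv_mul k
      calc (-1 : PowerSeries ℚ) ^ k * X ^ (T k) * (qPoch k)⁻¹ * Jp n k
          - (-1 : PowerSeries ℚ) ^ k * X ^ (T k)
          = (-1 : PowerSeries ℚ) ^ k * X ^ (T k) * (qPoch k)⁻¹ * Jp n k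
          - (-1 : PowerSeries ℚ) ^ k * X ^ (T k) * ((qPoch k)⁻¹ * qPoch k) := by rw [h1]; ring
        _ = (-1 : PowerSeries ℚ) ^ k * X ^ (T k) * (qPoch k)⁻¹ * (Jp n k - qPoch k) := by ring
    rw [this]
    exact (J_cong n k).mul_left _
  have : Uu n - Th n = (Uu n - V) + (V - Th n) := by ring
  rw [this]
  exact dvd_add ha hc

noncomputable def Aa (n : ℕ) : PowerSeries ℚ :=
  ∑ k ∈ range n, (X : PowerSeries ℚ) ^ (k + 1) * pr (k + 1) (n + 1) * pr (k + 2) (n + 1)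

lemma A_add_U (n : ℕ) : Aa n + Uu n = 1 := by
  have hU : Uu n = (∑ k ∈ range n, (X : PowerSeries ℚ) ^ (k + 1) * (pr (k + 2) (n + 1)) ^ 2)
      + (pr 1 (n + 1)) ^ 2 := by
    rw [Uu, Finset.sum_range_succ']
    norm_num
  rw [Aa, hU]
  have per : ∀ k ∈ range n,
      ((X : PowerSeries ℚ) ^ (k + 1) * pr (k + 1) (n + 1) * pr (k + 2) (n + 1)
        + X ^ (k + 1) * (pr (k + 2) (n + 1)) ^ 2)
      = (pr (k + 2) (n + 1)) ^ 2 - (pr (k + 1) (n + 1)) ^ 2 := by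
    intro k hk
    have hk' : k < n := Finset.mem_range.mp hk
    have h1 : pr (k + 1) (n + 1) = (1 - X ^ (k + 1)) * pr (k + 2) (n + 1) := pr_bot (by omega)
    rw [h1]; ring
  calc (∑ k ∈ range n, (X : PowerSeries ℚ) ^ (k+1) * pr (k+1) (n+1) * pr (k+2) (n+1))
        + ((∑ k ∈ range n, (X : PowerSeries ℚ) ^ (k+1) * (pr (k+2) (n+1)) ^ 2)
          + (pr 1 (n+1)) ^ 2)
      = (∑ k ∈ range n, ((pr (k + 2) (n + 1)) ^ 2 - (pr (k + 1) (n + 1)) ^ 2))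
          + (pr 1 (n+1)) ^ 2 := by
        rw [← add_assoc, ← Finset.sum_add_distrib, Finset.sum_congr rfl per]
    _ = 1 := by
        rw [Finset.sum_range_sub (fun k => (pr (k + 1) (n + 1)) ^ 2)]
        rw [pr_empty (le_refl _)]
        norm_num

lemma pr_congr {a b b' c : ℕ} (hab : a ≤ b) (hab' : a ≤ b') (hc : c ≤ b) (hc' : c ≤ b') :
    (X : PowerSeries ℚ) ^ c ∣ pr a b - pr a b' := by
  have key : ∀ {u v : ℕ}, a ≤ u → u ≤ v → c ≤ u →
      (X : PowerSeries ℚ) ^ c ∣ pr a u - pr a v := by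
    intro u v hau huv hcu
    rw [← pr_mul hau huv]
    have : pr a u - pr a u * pr u v = -(pr a u * (pr u v - 1)) := by ring
    rw [this]
    exact (((pow_dvd_pow X hcu).trans (pr_sub_one_dvd u v)).mul_left _).neg_right
  rcases le_total b b' with h | h
  · exact key hab h hc
  · have := key hab' h hc'
    have h2 : pr a b - pr a b' = -(pr a b' - pr a b) := by ring
    rw [h2]
    exact this.neg_right

lemma qPochInf_congr (n : ℕ) :
    (X : PowerSeries ℚ) ^ (n + 1) ∣ qPochInf - pr 1 (n + 1) := by
  apply dvd_of_coeff_eq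
  intro j hj
  rw [qPochInf, coeff_mk, qPoch_eq_pr]
  refine coeff_eq_of_dvd ?_ (Nat.lt_succ_self j)
  exact pr_congr (by omega) (by omega) (by omega) (by omega)

lemma constCoeff_qPochInf : constantCoeff qPochInf = 1 := by
  rw [← coeff_zero_eq_constantCoeff_apply, qPochInf, coeff_mk,
    coeff_zero_eq_constantCoeff_apply, constCoeff_qPoch]

lemma coeff_neg_one_pow_X_pow {j k e : ℕ} (h : j ≠ e) :
    coeff j ((-1 : PowerSeries ℚ) ^ k * X ^ e) = 0 := by
  rcases Nat.even_or_odd k with hk | hk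
  · rw [hk.neg_one_pow, one_mul, coeff_X_pow, if_neg h]
  · rw [hk.neg_one_pow, neg_one_mul, map_neg, coeff_X_pow, if_neg h, neg_zero]

lemma theta_congr (n : ℕ) :
    (X : PowerSeries ℚ) ^ (n + 1) ∣
      formalSum (fun k => (-1 : PowerSeries ℚ) ^ k * X ^ ((k + 1) * (k + 2) / 2))
        - (1 - Th n) := by
  have hT : ∀ k : ℕ, (k + 1) * (k + 2) / 2 = T (k + 1) := by
    intro k; rfl
  set Θ' : PowerSeries ℚ := ∑ k ∈ range (n + 1), (-1 : PowerSeries ℚ) ^ k * X ^ (T (k + 1))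
    with hΘ'
  have h1 : (X : PowerSeries ℚ) ^ (n + 1) ∣
      formalSum (fun k => (-1 : PowerSeries ℚ) ^ k * X ^ ((k + 1) * (k + 2) / 2)) - Θ' := by
    apply dvd_of_coeff_eq
    intro j hj
    rw [formalSum, coeff_mk, hΘ', map_sum]
    have hsub : ∀ k, (-1 : PowerSeries ℚ) ^ k * X ^ ((k + 1) * (k + 2) / 2)
        = (-1 : PowerSeries ℚ) ^ k * X ^ (T (k + 1)) := by
      intro k; rw [hT]
    simp only [hsub]
    refine Finset.sum_subset (s₂ := Finset.range (n+1)) ?_ ?_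
    · rw [Finset.range_subset_range]; omega
    intro k _ hk
    rw [Finset.mem_range, not_lt] at hk
    exact coeff_neg_one_pow_X_pow (by have := T_ge (k + 1); omega)
  have h2 : Θ' - (1 - Th n) = (-1 : PowerSeries ℚ) ^ n * X ^ (T (n + 1)) := by
    have hTh : Th n = 1 - ∑ k ∈ range n, (-1 : PowerSeries ℚ) ^ k * X ^ (T (k + 1)) := by
      rw [Th, Finset.sum_range_succ']
      have e0 : (-1 : PowerSeries ℚ) ^ 0 * X ^ (T 0) = 1 := by norm_num [T]
      rw [e0]
      have e1 : ∀ k, (-1 : PowerSeries ℚ) ^ (k + 1) * X ^ (T (k + 1))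
          = -((-1 : PowerSeries ℚ) ^ k * X ^ (T (k + 1))) := by
        intro k; rw [pow_succ]; ring
      rw [Finset.sum_congr rfl (fun k _ => e1 k), Finset.sum_neg_distrib]
      ring
    rw [hΘ', Finset.sum_range_succ, hTh]
    ring
  have hsplit : formalSum (fun k => (-1 : PowerSeries ℚ) ^ k * X ^ ((k + 1) * (k + 2) / 2))
      - (1 - Th n)
      = (formalSum (fun k => (-1 : PowerSeries ℚ) ^ k * X ^ ((k + 1) * (k + 2) / 2)) - Θ')
        + (Θ' - (1 - Th n)) := by ring
  rw [hsplit, h2]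
  exact dvd_add h1 ((pow_dvd_pow X (by have := T_ge (n+1); omega)).mul_left _)

/-- `∑_{m ≥ 1} q^m/((q;q)_{m-1}²(1-q^m)) = ((q;q)_∞)⁻² ∑_{n ≥ 1} (-1)^{n-1} q^{n(n+1)/2}`,
the generating function identity for stacks (both sums over indices `≥ 1` are
reindexed by `m = k + 1`, `n = k + 1`). -/
theorem stacks_genFn :
    formalSum (fun k => X ^ (k + 1) * ((qPoch k)⁻¹) ^ 2 * (1 - X ^ (k + 1))⁻¹) =
      (qPochInf⁻¹) ^ 2 *
        formalSum (fun k => (-1 : PowerSeries ℚ) ^ k * X ^ ((k + 1) * (k + 2) / 2)) := by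
  ext n
  set Pinv2 : PowerSeries ℚ := ((pr 1 (n + 1))⁻¹) ^ 2 with hPinv2
  have lhs_eq : coeff n
      (formalSum (fun k => X ^ (k + 1) * ((qPoch k)⁻¹) ^ 2 * (1 - X ^ (k + 1))⁻¹))
      = coeff n (Pinv2 * Aa n) := by
    rw [formalSum, coeff_mk, Finset.sum_range_succ]
    have hlast : coeff n ((X : PowerSeries ℚ) ^ (n + 1) * ((qPoch n)⁻¹) ^ 2
        * (1 - X ^ (n + 1))⁻¹) = 0 := by
      have hdvd : (X : PowerSeries ℚ) ^ (n + 1) ∣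
          X ^ (n + 1) * ((qPoch n)⁻¹) ^ 2 * (1 - X ^ (n + 1))⁻¹ :=
        (dvd_mul_right _ _).mul_right _
      exact PowerSeries.X_pow_dvd_iff.mp hdvd n (Nat.lt_succ_self n)
    rw [hlast, add_zero]
    have hterm : ∀ k ∈ range n,
        (X : PowerSeries ℚ) ^ (k + 1) * ((qPoch k)⁻¹) ^ 2 * (1 - X ^ (k + 1))⁻¹
        = Pinv2 * (X ^ (k + 1) * pr (k + 1) (n + 1) * pr (k + 2) (n + 1)) := by
      intro k hk
      have hk' : k < n := Finset.mem_range.mp hk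
      have e1 : ((qPoch k)⁻¹ : PowerSeries ℚ) = pr (k + 1) (n + 1) * (pr 1 (n + 1))⁻¹ := by
        rw [PowerSeries.inv_eq_iff_mul_eq_one
          (by rw [constCoeff_qPoch]; norm_num : constantCoeff (qPoch k) ≠ 0)]
        have hsplit : qPoch k * pr (k + 1) (n + 1) = pr 1 (n + 1) := by
          rw [qPoch_eq_pr]; exact pr_mul (by omega) (by omega)
        calc pr (k + 1) (n + 1) * (pr 1 (n + 1))⁻¹ * qPoch k
            = (pr 1 (n + 1))⁻¹ * (qPoch k * pr (k + 1) (n + 1)) := by ring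
          _ = (pr 1 (n + 1))⁻¹ * pr 1 (n + 1) := by rw [hsplit]
          _ = 1 := PowerSeries.inv_mul_cancel _ (by rw [constCoeff_pr (le_refl 1)]; norm_num)
      have e2 : pr (k + 1) (n + 1) * (1 - X ^ (k + 1))⁻¹ = pr (k + 2) (n + 1) := by
        have h1 : pr (k + 1) (n + 1) = (1 - X ^ (k + 1)) * pr (k + 2) (n + 1) :=
          pr_bot (by omega)
        have h2 : (1 - (X : PowerSeries ℚ) ^ (k + 1)) * (1 - X ^ (k + 1))⁻¹ = 1 :=
          PowerSeries.mul_inv_cancel _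
            (by rw [constCoeff_one_sub_X_pow (k + 1) (by omega)]; norm_num)
        calc pr (k + 1) (n + 1) * (1 - X ^ (k + 1))⁻¹
            = pr (k + 2) (n + 1) * ((1 - X ^ (k + 1)) * (1 - X ^ (k + 1))⁻¹) := by
              rw [h1]; ring
          _ = pr (k + 2) (n + 1) := by rw [h2, mul_one]
      rw [e1, hPinv2]
      linear_combination (X : PowerSeries ℚ) ^ (k + 1) * pr (k + 1) (n + 1)
        * ((pr 1 (n + 1))⁻¹) ^ 2 * e2
    rw [Finset.sum_congr rfl (fun k hk => by rw [hterm k hk])]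
    rw [← map_sum, ← Finset.mul_sum, ← Aa]
  have rhs_eq : coeff n ((qPochInf⁻¹) ^ 2 *
        formalSum (fun k => (-1 : PowerSeries ℚ) ^ k * X ^ ((k + 1) * (k + 2) / 2)))
      = coeff n (Pinv2 * (1 - Th n)) := by
    apply coeff_eq_of_dvd (D := n + 1) _ (Nat.lt_succ_self n)
    have hinv : (X : PowerSeries ℚ) ^ (n + 1) ∣ qPochInf⁻¹ - (pr 1 (n + 1))⁻¹ :=
      inv_congr (by rw [constCoeff_qPochInf]; norm_num)
        (by rw [constCoeff_pr (le_refl 1)]; norm_num) (qPochInf_congr n)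
    have hsq : (X : PowerSeries ℚ) ^ (n + 1) ∣ (qPochInf⁻¹) ^ 2 - Pinv2 := by
      have hfac : (qPochInf⁻¹) ^ 2 - Pinv2
          = (qPochInf⁻¹ + (pr 1 (n + 1))⁻¹) * (qPochInf⁻¹ - (pr 1 (n + 1))⁻¹) := by
        rw [hPinv2]; ring
      rw [hfac]
      exact hinv.mul_left _
    have hθ := theta_congr n
    have expand : (qPochInf⁻¹) ^ 2 *
          formalSum (fun k => (-1 : PowerSeries ℚ) ^ k * X ^ ((k + 1) * (k + 2) / 2))
        - Pinv2 * (1 - Th n)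
        = ((qPochInf⁻¹) ^ 2 - Pinv2) *
            formalSum (fun k => (-1 : PowerSeries ℚ) ^ k * X ^ ((k + 1) * (k + 2) / 2))
          + Pinv2 * (formalSum (fun k => (-1 : PowerSeries ℚ) ^ k * X ^ ((k + 1) * (k + 2) / 2))
              - (1 - Th n)) := by ring
    rw [expand]
    exact dvd_add (hsq.mul_right _) (hθ.mul_left _)
  rw [lhs_eq, rhs_eq]
  apply coeff_eq_of_dvd (D := n + 1) _ (Nat.lt_succ_self n)
  have hA : Aa n - (1 - Th n) = -(Uu n - Th n) := by
    linear_combination A_add_U n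
  have hfac : Pinv2 * Aa n - Pinv2 * (1 - Th n) = Pinv2 * (Aa n - (1 - Th n)) := by ring
  rw [hfac, hA, mul_neg]
  exact ((U_cong n).mul_left _).neg_right
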